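/- Let p be a prime, let c ∈ ℤ, let ∂ be the unique ℤ-linear derivation on ℤ[x_1,…,x_n] with ∂(x_i) = x_i² for all i, and let e_1 = x_1 + ⋯ + x_n. Define the ℤ-linear operator D_c on ℤ[x_1,…,x_n] by D_c(f) = ∂(f) + c·e_1·f. Then for every polynomial f, D_c^p(f) is divisible by p, i.e. D_c^p(f) ∈ p·ℤ[x_1,…,x_n]. -/

import Mathlib

open MvPolynomial Finset Nat

namespace TwistedAux

variable {n : ℕ}

/-- Iterated twisted Leibniz rule. -/
lemma iterL (Del : Derivation ℤ (MvPolynomial (Fin n) ℤ) (MvPolynomial (Fin n) ℤ))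
    (E : Module.End ℤ (MvPolynomial (Fin n) ℤ))
    (h : ∀ u v, E (u * v) = Del u * v + u * E v) :
    ∀ (k : ℕ) (u v : MvPolynomial (Fin n) ℤ),
      (E ^ k) (u * v) = ∑ ij ∈ Finset.HasAntidiagonal.antidiagonal k,
        (k.choose ij.1 : ℤ) • ((Del.toLinearMap ^ ij.1) u * (E ^ ij.2) v) := by
  intro k
  induction k with
  | zero => intro u v; simp
  | succ k ih =>
    intro u v
    set d := Del.toLinearMap with hd
    have hE : ∀ (i j : ℕ), E ((d ^ i) u * (E ^ j) v)
        = (d ^ (i+1)) u * (E ^ j) v + (d ^ i) u * (E ^ (j+1)) v := by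
      intro i j
      rw [h]
      congr 1
      · rw [_root_.pow_succ', Module.End.mul_apply]; rfl
      · rw [_root_.pow_succ', Module.End.mul_apply]
    rw [_root_.pow_succ', Module.End.mul_apply, ih, map_sum]
    have step1 : ∑ p ∈ antidiagonal k, E ((k.choose p.1 : ℤ) • ((d ^ p.1) u * (E ^ p.2) v))
        = (∑ p ∈ antidiagonal k, (k.choose p.1 : ℤ) • ((d ^ (p.1+1)) u * (E ^ p.2) v))
          + ∑ p ∈ antidiagonal k, (k.choose p.1 : ℤ) • ((d ^ p.1) u * (E ^ (p.2+1)) v) := by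
      rw [← Finset.sum_add_distrib]
      refine Finset.sum_congr rfl fun p _ => ?_
      rw [map_smul, hE, smul_add]
    rw [step1]
    have step2 : ∑ p ∈ antidiagonal k, (k.choose p.1 : ℤ) • ((d ^ p.1) u * (E ^ (p.2+1)) v)
        = (1:ℤ) • ((d ^ 0) u * (E ^ (k+1)) v)
          + ∑ p ∈ antidiagonal k, (k.choose (p.1+1) : ℤ) • ((d ^ (p.1+1)) u * (E ^ p.2) v) := by
      have h1 : ∑ p ∈ antidiagonal (k+1), (k.choose p.1 : ℤ) • ((d ^ p.1) u * (E ^ p.2) v)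
          = (k.choose (k+1) : ℤ) • ((d ^ (k+1)) u * (E ^ 0) v)
            + ∑ p ∈ antidiagonal k, (k.choose p.1 : ℤ) • ((d ^ p.1) u * (E ^ (p.2+1)) v) :=
        Finset.Nat.sum_antidiagonal_succ'
      have h2 : ∑ p ∈ antidiagonal (k+1), (k.choose p.1 : ℤ) • ((d ^ p.1) u * (E ^ p.2) v)
          = (k.choose 0 : ℤ) • ((d ^ 0) u * (E ^ (k+1)) v)
            + ∑ p ∈ antidiagonal k, (k.choose (p.1+1) : ℤ) • ((d ^ (p.1+1)) u * (E ^ p.2) v) :=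
        Finset.Nat.sum_antidiagonal_succ
      rw [Nat.choose_succ_self] at h1
      simp only [Nat.cast_zero, zero_smul, zero_add] at h1
      rw [← h1, h2, Nat.choose_zero_right, Nat.cast_one]
    rw [step2, Finset.Nat.sum_antidiagonal_succ]
    have step3 : ∑ p ∈ antidiagonal k, ((k+1).choose (p.1+1) : ℤ) • ((d ^ (p.1+1)) u * (E ^ p.2) v)
        = (∑ p ∈ antidiagonal k, (k.choose p.1 : ℤ) • ((d ^ (p.1+1)) u * (E ^ p.2) v))
          + ∑ p ∈ antidiagonal k, (k.choose (p.1+1) : ℤ) • ((d ^ (p.1+1)) u * (E ^ p.2) v) := by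
      rw [← Finset.sum_add_distrib]
      refine Finset.sum_congr rfl fun p _ => ?_
      rw [Nat.choose_succ_succ, Nat.cast_add, add_smul]
    rw [step3]
    simp only [Nat.choose_zero_right, Nat.cast_one]
    abel

lemma d_pow_X (Del : Derivation ℤ (MvPolynomial (Fin n) ℤ) (MvPolynomial (Fin n) ℤ))
    (hDel : ∀ i, Del (X i) = X i ^ 2) (i : Fin n) :
    ∀ j : ℕ, (Del.toLinearMap ^ j) (X i) = (j ! : ℤ) • (X i ^ (j+1)) := by
  intro j
  induction j with
  | zero => simp
  | succ j ih =>
    rw [_root_.pow_succ', Module.End.mul_apply, ih, map_smul]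
    have : Del.toLinearMap (X i ^ (j+1)) = (j+1 : ℤ) • X i ^ (j+2) := by
      show Del (X i ^ (j+1)) = _
      rw [Derivation.leibniz_pow, hDel]
      simp only [Nat.add_sub_cancel, smul_eq_mul, zsmul_eq_mul]
      push_cast
      ring
    rw [this, smul_smul]
    congr 1
    push_cast [Nat.factorial_succ]
    ring

lemma nat_dvd_choose_fact {p a : ℕ} (hp : p.Prime) (ha : a < p) :
    p ∣ p.choose a * (p - a)! := by
  have h1 : p.choose a * a ! * (p - a)! = p ! := Nat.choose_mul_factorial_mul_factorial ha.le
  have h2 : p ∣ p.choose a * (p - a)! * a ! := by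
    rw [show p.choose a * (p - a)! * a ! = p.choose a * a ! * (p - a)! by ring, h1]
    exact Nat.dvd_factorial hp.pos le_rfl
  rcases (Nat.Prime.dvd_mul hp).mp h2 with h | h
  · exact h
  · exact absurd (Nat.Prime.dvd_factorial hp |>.mp h) (by omega)

lemma del_leibniz (Del : Derivation ℤ (MvPolynomial (Fin n) ℤ) (MvPolynomial (Fin n) ℤ))
    (u v : MvPolynomial (Fin n) ℤ) :
    Del.toLinearMap (u * v) = Del u * v + u * Del.toLinearMap v := by
  show Del (u * v) = _
  rw [Derivation.leibniz]
  simp only [smul_eq_mul, Derivation.coeFn_coe]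
  ring

lemma int_dvd_term (p : ℕ) (z : ℤ) (hz : (p:ℤ) ∣ z) (g : MvPolynomial (Fin n) ℤ) :
    ((p:ℕ) : MvPolynomial (Fin n) ℤ) ∣ z • g := by
  obtain ⟨w, rfl⟩ := hz
  rw [mul_smul, zsmul_eq_mul, Int.cast_natCast]
  exact Dvd.intro _ rfl

lemma dvd_dpow (p : ℕ) (hp : p.Prime)
    (Del : Derivation ℤ (MvPolynomial (Fin n) ℤ) (MvPolynomial (Fin n) ℤ))
    (hDel : ∀ i, Del (X i) = X i ^ 2) :
    ∀ f : MvPolynomial (Fin n) ℤ,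
      ((p : ℕ) : MvPolynomial (Fin n) ℤ) ∣ (Del.toLinearMap ^ p) f := by
  intro f
  induction f using MvPolynomial.induction_on with
  | C a =>
    have h0 : Del.toLinearMap (C a) = 0 := by
      show Del (C a) = 0
      have hca : (C a : MvPolynomial (Fin n) ℤ) = algebraMap ℤ _ a := rfl
      rw [hca, Derivation.map_algebraMap]
    obtain ⟨q, hq⟩ : ∃ q, p = q + 1 := ⟨p - 1, by have := hp.pos; omega⟩
    rw [hq, _root_.pow_succ, Module.End.mul_apply, h0, map_zero]
    exact dvd_zero _
  | add f g hf hg => rw [map_add]; exact dvd_add hf hg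
  | mul_X f i hf =>
    rw [iterL Del Del.toLinearMap (del_leibniz Del) p f (X i)]
    refine Finset.dvd_sum fun q hq => ?_
    have hq' := Finset.HasAntidiagonal.mem_antidiagonal.mp hq
    rcases Nat.eq_zero_or_pos q.2 with h2 | h2
    · have h1 : q.1 = p := by omega
      rw [h1, h2, Nat.choose_self, Nat.cast_one, one_smul, pow_zero,
        Module.End.one_apply]
      exact dvd_mul_of_dvd_left hf (X i)
    · rw [d_pow_X Del hDel i q.2, mul_smul_comm, smul_smul]
      apply int_dvd_term
      have h3 : q.1 < p := by omega
      have h4 : p ∣ p.choose q.1 * q.2 ! := by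
        have := nat_dvd_choose_fact hp h3
        rwa [show p - q.1 = q.2 by omega] at this
      exact_mod_cast Int.natCast_dvd_natCast.mpr h4

lemma del_prod (Del : Derivation ℤ (MvPolynomial (Fin n) ℤ) (MvPolynomial (Fin n) ℤ))
    (hDel : ∀ i, Del (X i) = X i ^ 2) (s : Finset (Fin n)) :
    Del (∏ i ∈ s, X i) = (∑ i ∈ s, X i) * ∏ i ∈ s, X i := by
  induction s using Finset.induction_on with
  | empty => simp
  | @insert a s ha ih =>
    rw [Finset.prod_insert ha, Derivation.leibniz, ih, hDel, Finset.sum_insert ha]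
    simp only [smul_eq_mul]
    ring

lemma del_m_pow (Del : Derivation ℤ (MvPolynomial (Fin n) ℤ) (MvPolynomial (Fin n) ℤ))
    (hDel : ∀ i, Del (X i) = X i ^ 2) (t : ℕ) :
    Del ((∏ i : Fin n, X i) ^ t)
      = (t : ℤ) • ((∑ i : Fin n, X i) * (∏ i : Fin n, X i) ^ t) := by
  cases t with
  | zero => simp
  | succ t =>
    rw [Derivation.leibniz_pow, del_prod Del hDel]
    simp only [Nat.add_sub_cancel, smul_eq_mul, zsmul_eq_mul, smul_smul]
    push_cast
    ring

lemma conj (Del : Derivation ℤ (MvPolynomial (Fin n) ℤ) (MvPolynomial (Fin n) ℤ))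
    (hDel : ∀ i, Del (X i) = X i ^ 2) (t : ℕ)
    (E : Module.End ℤ (MvPolynomial (Fin n) ℤ))
    (hE : ∀ g, E g = Del g + (t : ℤ) • ((∑ i : Fin n, X i) * g)) :
    ∀ (k : ℕ) (f : MvPolynomial (Fin n) ℤ),
      (Del.toLinearMap ^ k) ((∏ i : Fin n, X i) ^ t * f)
        = (∏ i : Fin n, X i) ^ t * (E ^ k) f := by
  intro k
  induction k with
  | zero => intro f; simp
  | succ k ih =>
    intro f
    have h1 : Del.toLinearMap ((∏ i : Fin n, X i) ^ t * f)
        = (∏ i : Fin n, X i) ^ t * E f := by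
      show Del (_ * _) = _
      rw [Derivation.leibniz, del_m_pow Del hDel, hE]
      simp only [smul_eq_mul, zsmul_eq_mul]
      ring
    rw [_root_.pow_succ, Module.End.mul_apply, h1, ih, _root_.pow_succ,
      Module.End.mul_apply]

lemma powA (p : ℕ) (A B : Module.End ℤ (MvPolynomial (Fin n) ℤ))
    (h : ∀ f, ((p : ℕ) : MvPolynomial (Fin n) ℤ) ∣ A f - B f) :
    ∀ (k : ℕ) (f : MvPolynomial (Fin n) ℤ),
      ((p : ℕ) : MvPolynomial (Fin n) ℤ) ∣ (A ^ k) f - (B ^ k) f := by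
  intro k
  induction k with
  | zero => intro f; simp
  | succ k ih =>
    intro f
    have key : (A ^ (k+1)) f - (B ^ (k+1)) f
        = A ((A ^ k) f - (B ^ k) f) + (A ((B ^ k) f) - B ((B ^ k) f)) := by
      rw [map_sub, _root_.pow_succ', _root_.pow_succ', Module.End.mul_apply,
        Module.End.mul_apply]
      ring
    rw [key]
    refine dvd_add ?_ (h _)
    obtain ⟨g, hg⟩ := ih f
    rw [hg, ← nsmul_eq_mul, map_nsmul, nsmul_eq_mul]
    exact Dvd.intro _ rfl

lemma cancel_monomial (s : Fin n →₀ ℕ) (r : ℤ) (g : MvPolynomial (Fin n) ℤ)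
    (h : C r ∣ monomial s 1 * g) : C r ∣ g := by
  rw [C_dvd_iff_dvd_coeff] at h ⊢
  intro i
  have := h (s + i)
  rwa [coeff_monomial_mul, one_mul] at this

lemma m_pow_eq_monomial (t : ℕ) :
    (∏ i : Fin n, X i) ^ t
      = monomial (Finsupp.equivFunOnFinite.symm fun _ : Fin n => t) (1 : ℤ) := by
  set s : Fin n →₀ ℕ := Finsupp.equivFunOnFinite.symm fun _ : Fin n => t with hs
  have hsx : ∀ x, s x = t := fun x => rfl
  have h0 : (∏ i : Fin n, X i) ^ t = ∏ i : Fin n, (X i : MvPolynomial (Fin n) ℤ) ^ t :=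
    (Finset.prod_pow _ _ _).symm
  rw [h0, ← prod_X_pow_eq_monomial]
  have h2 : ∏ x ∈ s.support, (X x : MvPolynomial (Fin n) ℤ) ^ s x
      = ∏ x ∈ (univ : Finset (Fin n)), (X x : MvPolynomial (Fin n) ℤ) ^ s x := by
    refine Finset.prod_subset (Finset.subset_univ _) fun x _ hx => ?_
    rw [Finsupp.notMem_support_iff.mp hx, pow_zero]
  rw [h2]
  exact Finset.prod_congr rfl fun x _ => by rw [hsx]

end TwistedAux

open TwistedAux

/-- Let `p` be a prime, `c ∈ ℤ`, `∂` the derivation on `ℤ[x_1,…,x_n]` with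
`∂(x_i) = x_i²`, and `e₁ = x_1 + ⋯ + x_n`. If `D_c(f) = ∂(f) + c·e₁·f`, then `D_c^p(f)` is
divisible by `p` for every polynomial `f`. -/
theorem twisted_derivation_pow_p_dvd (p n : ℕ) (hp : p.Prime) (c : ℤ)
    (Del : Derivation ℤ (MvPolynomial (Fin n) ℤ) (MvPolynomial (Fin n) ℤ))
    (hDel : ∀ i, Del (X i) = X i ^ 2)
    (D : Module.End ℤ (MvPolynomial (Fin n) ℤ))
    (hD : ∀ f, D f = Del f + C c * (∑ i, X i) * f) :
    ∀ f : MvPolynomial (Fin n) ℤ,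
      (p : MvPolynomial (Fin n) ℤ) ∣ (D ^ p) f := by
  intro f
  have hpne : (p:ℤ) ≠ 0 := by exact_mod_cast hp.ne_zero
  set t : ℕ := (c % (p:ℤ)).toNat with ht
  have htc : (t:ℤ) = c % (p:ℤ) := Int.toNat_of_nonneg (Int.emod_nonneg c hpne)
  set E : Module.End ℤ (MvPolynomial (Fin n) ℤ) :=
    Del.toLinearMap + (t:ℤ) • (LinearMap.mulLeft ℤ (∑ i : Fin n, X i)) with hEdef
  have hE : ∀ g, E g = Del g + (t:ℤ) • ((∑ i : Fin n, X i) * g) := by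
    intro g
    simp [hEdef, LinearMap.mulLeft_apply]
  have hdiff : ∀ g, ((p:ℕ) : MvPolynomial (Fin n) ℤ) ∣ D g - E g := by
    intro g
    have heq : D g - E g = (c - (t:ℤ)) • ((∑ i : Fin n, X i) * g) := by
      rw [hD, hE, sub_smul, zsmul_eq_mul, zsmul_eq_mul]
      rw [show ((c : ℤ) : MvPolynomial (Fin n) ℤ) = C c from rfl]
      ring
    rw [heq]
    apply int_dvd_term
    exact ⟨c / p, by rw [htc, Int.emod_def]; ring⟩
  have hEp : ∀ g, ((p:ℕ) : MvPolynomial (Fin n) ℤ) ∣ (E ^ p) g := by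
    intro g
    have hc := conj Del hDel t E hE p g
    have h2 : ((p:ℕ) : MvPolynomial (Fin n) ℤ)
        ∣ (∏ i : Fin n, X i) ^ t * (E ^ p) g := by
      rw [← hc]
      exact dvd_dpow p hp Del hDel _
    rw [m_pow_eq_monomial] at h2
    have hcast : ((p:ℕ) : MvPolynomial (Fin n) ℤ) = C ((p:ℕ) : ℤ) := by
      simp
    rw [hcast] at h2 ⊢
    exact cancel_monomial _ _ _ h2
  obtain ⟨g1, hg1⟩ := powA p D E hdiff p f
  obtain ⟨g2, hg2⟩ := hEp f
  exact ⟨g1 + g2, by rw [mul_add, ← hg1, ← hg2]; ring⟩
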